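/- For every complex number m, lim_{τ→0⁺} (K₀(τ, τ; m) + 2im K₁(τ, τ; m)) = i m. -/

import Mathlib

noncomputable section
open Complex Filter

/-- The hypergeometric argument z = (τ²−r²)/((τ+2)²−r²), as a complex number. -/
def zArg (r τ : ℝ) : ℂ := (((τ ^ 2 - r ^ 2) / ((τ + 2) ^ 2 - r ^ 2) : ℝ) : ℂ)

/-- The kernel K₁(r,τ;m). -/
def K1 (F : ℂ → ℂ → ℂ → ℂ → ℂ) (m : ℂ) (r τ : ℝ) : ℂ :=
  (2 : ℂ) ^ (2 * I * m) * ((((τ + 2) ^ 2 - r ^ 2 : ℝ)) : ℂ) ^ (-(I * m))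
    * F (I * m) (I * m) 1 (zArg r τ)

/-- The kernel K₀(r,τ;m). -/
def K0 (F : ℂ → ℂ → ℂ → ℂ → ℂ) (m : ℂ) (r τ : ℝ) : ℂ :=
  -(2 : ℂ) ^ (2 * I * m) * m * ((((τ + 2) ^ 2 - r ^ 2 : ℝ)) : ℂ) ^ (-(I * m)) *
    ((2 * I * ((r ^ 2 - τ * (τ + 1) : ℝ) : ℂ) / ((r ^ 2 - τ ^ 2 : ℝ) : ℂ))
        * F (I * m) (I * m) 1 (zArg r τ)
      - (4 * I * ((τ + 1 : ℝ) : ℂ) * ((τ * (τ + 2) - r ^ 2 : ℝ) : ℂ)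
            / (((τ ^ 2 - r ^ 2 : ℝ) : ℂ) * ((((τ + 2) ^ 2 - r ^ 2 : ℝ)) : ℂ)))
        * F (I * m + 1) (I * m) 1 (zArg r τ))

/-- The explicit value of the inner limit. -/
def Lval (m : ℂ) (τ : ℝ) : ℂ :=
  -(2 : ℂ) ^ (2 * I * m) * m * (((4 * τ + 4 : ℝ)) : ℂ) ^ (-(I * m)) *
    (2 * I - 4 * I * ((τ + 1 : ℝ) : ℂ) / ((4 * τ + 4 : ℝ) : ℂ)
      + 2 * I * (τ : ℂ) * ((1 - I * m) / ((4 * τ + 4 : ℝ) : ℂ)))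

lemma two_four_cpow (m : ℂ) : (2 : ℂ) ^ (2 * I * m) * ((4 : ℝ) : ℂ) ^ (-(I * m)) = 1 := by
  rw [Complex.cpow_def_of_ne_zero two_ne_zero, Complex.cpow_def_of_ne_zero (by norm_num),
    ← Complex.exp_add]
  have h2 : Complex.log 2 = ((Real.log 2 : ℝ) : ℂ) := by
    rw [show (2:ℂ) = ((2:ℝ):ℂ) by norm_num, Complex.ofReal_log (by norm_num)]
  have hr4 : Real.log 4 = 2 * Real.log 2 := by
    rw [show (4:ℝ) = 2^2 by norm_num, Real.log_pow]; push_cast; ring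
  have h4 : Complex.log ((4:ℝ):ℂ) = ((2 * Real.log 2 : ℝ) : ℂ) := by
    rw [← Complex.ofReal_log (by norm_num : (0:ℝ) ≤ 4), hr4]
  rw [h2, h4, show ((Real.log 2 : ℝ) : ℂ) * (2 * I * m)
      + ((2 * Real.log 2 : ℝ) : ℂ) * (-(I * m)) = 0 by push_cast; ring, Complex.exp_zero]

/-- Auxiliary regularized function. -/
def Psi (F : ℂ → ℂ → ℂ → ℂ → ℂ) (m : ℂ) (B0 : ℝ) (w : ℂ) : ℂ :=
  F (I * m) (I * m) 1 (w / ((B0 : ℂ) + w))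
    - ((B0 : ℂ) / ((B0 : ℂ) + w)) * F (I * m + 1) (I * m) 1 (w / ((B0 : ℂ) + w))

lemma psi_deriv (F : ℂ → ℂ → ℂ → ℂ → ℂ)
    (hF0 : ∀ a b c : ℂ, F a b c 0 = 1)
    (hF' : ∀ a b c : ℂ, HasDerivAt (F a b c) (a * b / c) 0)
    (m : ℂ) (B0 : ℝ) (hB0 : 0 < B0) :
    HasDerivAt (Psi F m B0) ((1 - I * m) / ((B0 : ℝ) : ℂ)) 0 := by
  have hB0C : ((B0 : ℝ) : ℂ) ≠ 0 := Complex.ofReal_ne_zero.mpr (ne_of_gt hB0)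
  have hden0 : ((B0 : ℝ) : ℂ) + 0 ≠ 0 := by simpa using hB0C
  have hg : HasDerivAt (fun w : ℂ => w / (((B0 : ℝ) : ℂ) + w)) ((((B0 : ℝ) : ℂ))⁻¹) 0 := by
    have h := HasDerivAt.fun_div (hasDerivAt_id (0 : ℂ))
      ((hasDerivAt_id (0 : ℂ)).const_add (((B0 : ℝ) : ℂ))) hden0
    refine h.congr_deriv ?_
    simp only [id]
    field_simp
    ring
  have hq : HasDerivAt (fun w : ℂ => ((B0 : ℝ) : ℂ) / (((B0 : ℝ) : ℂ) + w))
      (-((((B0 : ℝ) : ℂ))⁻¹)) 0 := by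
    have h := HasDerivAt.fun_div (hasDerivAt_const (0 : ℂ) (((B0 : ℝ) : ℂ)))
      ((hasDerivAt_id (0 : ℂ)).const_add (((B0 : ℝ) : ℂ))) hden0
    refine h.congr_deriv ?_
    simp only [id]
    field_simp
    ring
  have hF1 : HasDerivAt (F (I * m) (I * m) 1) (I * m * (I * m) / 1)
      ((fun w : ℂ => w / (((B0 : ℝ) : ℂ) + w)) 0) := by
    simpa using hF' (I * m) (I * m) 1
  have hF2 : HasDerivAt (F (I * m + 1) (I * m) 1) ((I * m + 1) * (I * m) / 1)
      ((fun w : ℂ => w / (((B0 : ℝ) : ℂ) + w)) 0) := by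
    simpa using hF' (I * m + 1) (I * m) 1
  have hcomp1 := hF1.comp 0 hg
  have hcomp2 := hF2.comp 0 hg
  have hprod := hq.mul hcomp2
  have hsub := hcomp1.sub hprod
  have hval : I * m * (I * m) / 1 * (((B0 : ℝ) : ℂ))⁻¹ -
      (-((((B0 : ℝ) : ℂ))⁻¹) * ((F (I * m + 1) (I * m) 1 ∘ fun w : ℂ =>
          w / (((B0 : ℝ) : ℂ) + w)) 0)
        + ((B0 : ℝ) : ℂ) / (((B0 : ℝ) : ℂ) + 0) * ((I * m + 1) * (I * m) / 1 * (((B0 : ℝ) : ℂ))⁻¹))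
      = (1 - I * m) / ((B0 : ℝ) : ℂ) := by
    simp only [Function.comp, zero_div, hF0, add_zero, div_one]
    field_simp
    ring
  rw [hval] at hsub
  exact hsub

lemma inner_limit (F : ℂ → ℂ → ℂ → ℂ → ℂ)
    (hF0 : ∀ a b c : ℂ, F a b c 0 = 1)
    (hF' : ∀ a b c : ℂ, HasDerivAt (F a b c) (a * b / c) 0)
    (m : ℂ) (τ : ℝ) (hτ : 0 < τ) :
    Tendsto (fun r : ℝ => K0 F m r τ) (nhdsWithin τ (Set.Iio τ)) (nhds (Lval m τ)) := by
  have hB0 : (0 : ℝ) < 4 * τ + 4 := by linarith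
  have hB0C : ((4 * τ + 4 : ℝ) : ℂ) ≠ 0 := Complex.ofReal_ne_zero.mpr (ne_of_gt hB0)
  -- the slope limit
  have hPsi0 : Psi F m (4 * τ + 4) 0 = 0 := by
    have h4 : (4 * (τ:ℂ) + 4) ≠ 0 := by
      intro h; apply hB0C; push_cast; exact h
    simp [Psi, hF0, div_self h4]
  have hPsiD : HasDerivAt (fun u : ℝ => Psi F m (4 * τ + 4) ((u : ℝ) : ℂ))
      ((1 - I * m) / ((4 * τ + 4 : ℝ) : ℂ)) 0 :=
    (psi_deriv F hF0 hF' m _ hB0).comp_ofReal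
  have hslope := hasDerivAt_iff_tendsto_slope.mp hPsiD
  have hslope' : Tendsto (fun u : ℝ => ((u : ℝ) : ℂ)⁻¹ * Psi F m (4 * τ + 4) ((u : ℝ) : ℂ))
      (nhdsWithin 0 {(0:ℝ)}ᶜ) (nhds ((1 - I * m) / ((4 * τ + 4 : ℝ) : ℂ))) := by
    refine hslope.congr fun u => ?_
    simp [slope, hPsi0, Complex.real_smul]
  -- composing with u = τ² - r²
  have hu : Tendsto (fun r : ℝ => τ ^ 2 - r ^ 2) (nhdsWithin τ (Set.Iio τ))
      (nhdsWithin 0 {(0:ℝ)}ᶜ) := by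
    rw [tendsto_nhdsWithin_iff]
    constructor
    · have hc : Continuous (fun r : ℝ => τ ^ 2 - r ^ 2) := by continuity
      have h := (hc.tendsto τ).mono_left (nhdsWithin_le_nhds (s := Set.Iio τ))
      simpa using h
    · filter_upwards [Ioo_mem_nhdsLT (a := τ/2) (b := τ) (by linarith)]
        with r hr
      have h1 : τ / 2 < r := hr.1
      have h2 : r < τ := hr.2
      have : r ^ 2 < τ ^ 2 := by nlinarith
      simp only [Set.mem_compl_iff, Set.mem_singleton_iff]
      intro h
      nlinarith
  have hsing : Tendsto (fun r : ℝ => ((τ ^ 2 - r ^ 2 : ℝ) : ℂ)⁻¹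
        * Psi F m (4 * τ + 4) ((τ ^ 2 - r ^ 2 : ℝ) : ℂ))
      (nhdsWithin τ (Set.Iio τ)) (nhds ((1 - I * m) / ((4 * τ + 4 : ℝ) : ℂ))) :=
    hslope'.comp hu
  -- continuous pieces
  have hBr : Tendsto (fun r : ℝ => (((τ + 2) ^ 2 - r ^ 2 : ℝ) : ℂ))
      (nhdsWithin τ (Set.Iio τ)) (nhds ((4 * τ + 4 : ℝ) : ℂ)) := by
    have hc : Continuous (fun r : ℝ => (((τ + 2) ^ 2 - r ^ 2 : ℝ) : ℂ)) := by continuity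
    have h := (hc.tendsto τ).mono_left (nhdsWithin_le_nhds (s := Set.Iio τ))
    simpa [show ((τ + 2) ^ 2 - τ ^ 2 : ℝ) = 4 * τ + 4 by ring] using h
  have hC : Tendsto (fun r : ℝ => (((τ + 2) ^ 2 - r ^ 2 : ℝ) : ℂ) ^ (-(I * m)))
      (nhdsWithin τ (Set.Iio τ)) (nhds (((4 * τ + 4 : ℝ) : ℂ) ^ (-(I * m)))) := by
    have hc : ContinuousAt (fun z : ℂ => z ^ (-(I * m))) ((4 * τ + 4 : ℝ) : ℂ) :=
      continuousAt_cpow_const (by rw [Complex.mem_slitPlane_iff]; left; simpa using hB0)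
    exact hc.tendsto.comp hBr
  have hz : Tendsto (fun r : ℝ => zArg r τ) (nhdsWithin τ (Set.Iio τ)) (nhds 0) := by
    have hc : ContinuousAt (fun r : ℝ => zArg r τ) τ := by
      apply Complex.continuous_ofReal.continuousAt.comp
      exact ContinuousAt.div (by fun_prop) (by fun_prop)
        (by show ((τ + 2) ^ 2 - τ ^ 2 : ℝ) ≠ 0; nlinarith)
    have h := hc.tendsto.mono_left (nhdsWithin_le_nhds (s := Set.Iio τ))
    simpa [zArg] using h
  have hf1 : Tendsto (fun r : ℝ => F (I * m) (I * m) 1 (zArg r τ))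
      (nhdsWithin τ (Set.Iio τ)) (nhds 1) := by
    have hc : ContinuousAt (F (I * m) (I * m) 1) 0 :=
      (hF' (I * m) (I * m) 1).differentiableAt.continuousAt
    have h := hc.tendsto.comp hz
    simpa [hF0, Function.comp_def] using h
  have hf2 : Tendsto (fun r : ℝ => F (I * m + 1) (I * m) 1 (zArg r τ))
      (nhdsWithin τ (Set.Iio τ)) (nhds 1) := by
    have hc : ContinuousAt (F (I * m + 1) (I * m) 1) 0 :=
      (hF' (I * m + 1) (I * m) 1).differentiableAt.continuousAt
    have h := hc.tendsto.comp hz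
    simpa [hF0, Function.comp_def] using h
  -- the limit of the regularized form
  have hG : Tendsto (fun r : ℝ =>
      -(2 : ℂ) ^ (2 * I * m) * m * (((τ + 2) ^ 2 - r ^ 2 : ℝ) : ℂ) ^ (-(I * m)) *
        (2 * I * F (I * m) (I * m) 1 (zArg r τ)
          - 4 * I * ((τ + 1 : ℝ) : ℂ) / (((τ + 2) ^ 2 - r ^ 2 : ℝ) : ℂ)
              * F (I * m + 1) (I * m) 1 (zArg r τ)
          + 2 * I * (τ : ℂ) * (((τ ^ 2 - r ^ 2 : ℝ) : ℂ)⁻¹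
              * Psi F m (4 * τ + 4) ((τ ^ 2 - r ^ 2 : ℝ) : ℂ))))
      (nhdsWithin τ (Set.Iio τ))
      (nhds (-(2 : ℂ) ^ (2 * I * m) * m * ((4 * τ + 4 : ℝ) : ℂ) ^ (-(I * m)) *
        (2 * I * 1 - 4 * I * ((τ + 1 : ℝ) : ℂ) / ((4 * τ + 4 : ℝ) : ℂ) * 1
          + 2 * I * (τ : ℂ) * ((1 - I * m) / ((4 * τ + 4 : ℝ) : ℂ))))) :=
    (tendsto_const_nhds.mul hC).mul
      (((tendsto_const_nhds.mul hf1).sub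
          ((tendsto_const_nhds.div hBr hB0C).mul hf2)).add
        (tendsto_const_nhds.mul hsing))
  have hLv : -(2 : ℂ) ^ (2 * I * m) * m * ((4 * τ + 4 : ℝ) : ℂ) ^ (-(I * m)) *
      (2 * I * 1 - 4 * I * ((τ + 1 : ℝ) : ℂ) / ((4 * τ + 4 : ℝ) : ℂ) * 1
        + 2 * I * (τ : ℂ) * ((1 - I * m) / ((4 * τ + 4 : ℝ) : ℂ))) = Lval m τ := by
    unfold Lval; ring
  rw [hLv] at hG
  refine Tendsto.congr' ?_ hG
  filter_upwards [Ioo_mem_nhdsLT (a := τ/2) (b := τ) (by linarith)]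
    with r hr
  have h1 : τ / 2 < r := hr.1
  have h2 : r < τ := hr.2
  have hr0 : 0 < r := by linarith
  have hupos : (0 : ℝ) < τ ^ 2 - r ^ 2 := by nlinarith
  have hBpos : (0 : ℝ) < (τ + 2) ^ 2 - r ^ 2 := by nlinarith
  have hune : ((τ ^ 2 - r ^ 2 : ℝ) : ℂ) ≠ 0 := Complex.ofReal_ne_zero.mpr (ne_of_gt hupos)
  have hBne : (((τ + 2) ^ 2 - r ^ 2 : ℝ) : ℂ) ≠ 0 := Complex.ofReal_ne_zero.mpr (ne_of_gt hBpos)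
  have hrτne : ((r ^ 2 - τ ^ 2 : ℝ) : ℂ) ≠ 0 := by
    rw [Complex.ofReal_ne_zero]; intro h; nlinarith
  have hcoef : (((4 * τ + 4 : ℝ) : ℂ) + ((τ ^ 2 - r ^ 2 : ℝ) : ℂ))
      = (((τ + 2) ^ 2 - r ^ 2 : ℝ) : ℂ) := by push_cast; ring
  have harg : ((τ ^ 2 - r ^ 2 : ℝ) : ℂ) / (((τ + 2) ^ 2 - r ^ 2 : ℝ) : ℂ)
      = zArg r τ := by
    unfold zArg; push_cast; ring
  unfold K0 Psi
  rw [hcoef, harg]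
  have hA : ((τ : ℂ) ^ 2 - (r : ℂ) ^ 2) ≠ 0 := by push_cast at hune; exact hune
  have hB : (((τ : ℂ) + 2) ^ 2 - (r : ℂ) ^ 2) ≠ 0 := by push_cast at hBne; exact hBne
  have hRT : ((r : ℂ) ^ 2 - (τ : ℂ) ^ 2) ≠ 0 := by push_cast at hrτne; exact hrτne
  set a := F (I * m) (I * m) 1 (zArg r τ) with ha
  set b := F (I * m + 1) (I * m) 1 (zArg r τ) with hb
  congr 1
  push_cast
  field_simp
  ring

lemma outer_limit (F : ℂ → ℂ → ℂ → ℂ → ℂ)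
    (hF0 : ∀ a b c : ℂ, F a b c 0 = 1) (m : ℂ) :
    Tendsto (fun τ : ℝ => Lval m τ + 2 * I * m * K1 F m τ τ)
      (nhdsWithin 0 (Set.Ioi 0)) (nhds (I * m)) := by
  have key : ∀ τ : ℝ, Lval m τ + 2 * I * m * K1 F m τ τ =
      ((2 : ℂ) ^ (2 * I * m) * ((4 * τ + 4 : ℝ) : ℂ) ^ (-(I * m))) *
      ((-m) * (2 * I - 4 * I * ((τ + 1 : ℝ) : ℂ) / ((4 * τ + 4 : ℝ) : ℂ)
        + 2 * I * (τ : ℂ) * ((1 - I * m) / ((4 * τ + 4 : ℝ) : ℂ))) + 2 * I * m) := by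
    intro τ
    have h1 : ((τ + 2) ^ 2 - τ ^ 2 : ℝ) = 4 * τ + 4 := by ring
    have h2 : zArg τ τ = 0 := by simp [zArg]
    simp only [Lval, K1, h1, h2, hF0]
    ring
  simp only [key]
  have hden : Tendsto (fun τ : ℝ => ((4 * τ + 4 : ℝ) : ℂ)) (nhdsWithin 0 (Set.Ioi 0))
      (nhds ((4 : ℝ) : ℂ)) := by
    have hc : Continuous (fun τ : ℝ => ((4 * τ + 4 : ℝ) : ℂ)) := by continuity
    have h := (hc.tendsto 0).mono_left (nhdsWithin_le_nhds (s := Set.Ioi (0:ℝ)))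
    simpa using h
  have hτ1 : Tendsto (fun τ : ℝ => ((τ + 1 : ℝ) : ℂ)) (nhdsWithin 0 (Set.Ioi 0))
      (nhds 1) := by
    have hc : Continuous (fun τ : ℝ => ((τ + 1 : ℝ) : ℂ)) := by continuity
    have h := (hc.tendsto 0).mono_left (nhdsWithin_le_nhds (s := Set.Ioi (0:ℝ)))
    simpa using h
  have hτ0 : Tendsto (fun τ : ℝ => (τ : ℂ)) (nhdsWithin 0 (Set.Ioi 0)) (nhds 0) := by
    have h := (Complex.continuous_ofReal.tendsto 0).mono_left
      (nhdsWithin_le_nhds (s := Set.Ioi (0:ℝ)))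
    simpa using h
  have hpow : Tendsto (fun τ : ℝ => ((4 * τ + 4 : ℝ) : ℂ) ^ (-(I * m)))
      (nhdsWithin 0 (Set.Ioi 0)) (nhds (((4 : ℝ) : ℂ) ^ (-(I * m)))) := by
    have hc : ContinuousAt (fun z : ℂ => z ^ (-(I * m))) ((4 : ℝ) : ℂ) :=
      continuousAt_cpow_const (by rw [Complex.mem_slitPlane_iff]; left; norm_num)
    exact hc.tendsto.comp hden
  have hfour : ((4 : ℝ) : ℂ) ≠ 0 := by norm_num
  have hD1 : Tendsto (fun τ : ℝ => 4 * I * ((τ + 1 : ℝ) : ℂ) / ((4 * τ + 4 : ℝ) : ℂ))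
      (nhdsWithin 0 (Set.Ioi 0)) (nhds (4 * I * 1 / ((4 : ℝ) : ℂ))) :=
    (tendsto_const_nhds.mul hτ1).div hden hfour
  have hD2 : Tendsto (fun τ : ℝ => 2 * I * (τ : ℂ) * ((1 - I * m) / ((4 * τ + 4 : ℝ) : ℂ)))
      (nhdsWithin 0 (Set.Ioi 0)) (nhds (2 * I * 0 * ((1 - I * m) / ((4 : ℝ) : ℂ)))) :=
    (tendsto_const_nhds.mul hτ0).mul (tendsto_const_nhds.div hden hfour)
  have hmain : Tendsto (fun τ : ℝ =>
      (2 : ℂ) ^ (2 * I * m) * ((4 * τ + 4 : ℝ) : ℂ) ^ (-(I * m)) *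
      ((-m) * (2 * I - 4 * I * ((τ + 1 : ℝ) : ℂ) / ((4 * τ + 4 : ℝ) : ℂ)
        + 2 * I * (τ : ℂ) * ((1 - I * m) / ((4 * τ + 4 : ℝ) : ℂ))) + 2 * I * m))
      (nhdsWithin 0 (Set.Ioi 0))
      (nhds ((2 : ℂ) ^ (2 * I * m) * ((4 : ℝ) : ℂ) ^ (-(I * m)) *
        ((-m) * (2 * I - 4 * I * 1 / ((4 : ℝ) : ℂ)
          + 2 * I * 0 * ((1 - I * m) / ((4 : ℝ) : ℂ))) + 2 * I * m))) :=
    (tendsto_const_nhds.mul hpow).mul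
      ((tendsto_const_nhds.mul ((tendsto_const_nhds.sub hD1).add hD2)).add
        tendsto_const_nhds)
  have hval : (2 : ℂ) ^ (2 * I * m) * ((4 : ℝ) : ℂ) ^ (-(I * m)) *
      (-m * (2 * I - 4 * I * 1 / ((4 : ℝ) : ℂ) + 2 * I * 0 * ((1 - I * m) / ((4 : ℝ) : ℂ)))
        + 2 * I * m) = I * m := by
    rw [two_four_cpow]; push_cast; ring
  rw [hval] at hmain
  exact hmain

/-- lim_{τ→0⁺} (K₀(τ,τ;m) + 2im K₁(τ,τ;m)) = im, where the diagonal value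
K₀(τ,τ;m) is interpreted as the limit of K₀(r,τ;m) as r → τ⁻.  The function F
is a Gauss hypergeometric: F(a,b;c;0) = 1 and d/dz F(a,b;c;z)|₀ = ab/c. -/
theorem K0_plus_2imK1_diagonal_limit
    (F : ℂ → ℂ → ℂ → ℂ → ℂ)
    (hF0 : ∀ a b c : ℂ, F a b c 0 = 1)
    (hF' : ∀ a b c : ℂ, HasDerivAt (F a b c) (a * b / c) 0)
    (m : ℂ) (D : ℝ → ℂ)
    (hD : ∀ τ : ℝ, 0 < τ →
      Tendsto (fun r : ℝ => K0 F m r τ) (nhdsWithin τ (Set.Iio τ)) (nhds (D τ))) :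
    Tendsto (fun τ : ℝ => D τ + 2 * I * m * K1 F m τ τ)
      (nhdsWithin 0 (Set.Ioi 0)) (nhds (I * m)) := by
  have hDL : ∀ τ : ℝ, 0 < τ → D τ = Lval m τ := fun τ hτ =>
    tendsto_nhds_unique (hD τ hτ) (inner_limit F hF0 hF' m τ hτ)
  refine (outer_limit F hF0 m).congr' ?_
  filter_upwards [self_mem_nhdsWithin] with τ (hτ : 0 < τ)
  rw [hDL τ hτ]
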